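/- For every k ≥ 1, the function f_k of the lower-bound construction is at distance at least k/4 from every submodular function: for every submodular g : 2^[n_k] → ℝ there exists S with |f_k(S) − g(S)| ≥ k/4. -/

import Mathlib

theorem stmt_10 (k : ℕ) (hk : 1 ≤ k)
    (S : Fin k → Finset (Fin (k * (k + 3) / 2)))
    (hcard : ∀ i, (S i).card = i.val + 2)
    (hdisj : ∀ i j, i ≠ j → Disjoint (S i) (S j))
    (hcover : Finset.univ.biUnion S = Finset.univ)
    (fk : Finset (Fin (k * (k + 3) / 2)) → ℝ)
    (hfk : ∀ A,
      fk A =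
        if (Finset.univ.filter (fun i => 2 ≤ (A ∩ S i).card)).card ≤ 1 then
          (((Finset.univ.sup (fun i => (A ∩ S i).card) : ℕ) : ℝ)
            + ((Finset.univ.filter (fun i => A ∩ S i = ∅)).card : ℝ)
            - (if A ≠ ∅ then 1 else 0)) / 2
        else
          -((k : ℝ) + 2) ^ A.card) :
    ∀ g : Finset (Fin (k * (k + 3) / 2)) → ℝ,
      (∀ A B, g A + g B ≥ g (A ∪ B) + g (A ∩ B)) →
      ∃ A, |fk A - g A| ≥ (k : ℝ) / 4 := by
  intro g hsub
  by_contra hcon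
  push_neg at hcon
  haveI : Nonempty (Fin k) := ⟨⟨0, hk⟩⟩
  -- Lemma A : submodular subadditivity of marginals
  have lemA : ∀ (B X : Finset (Fin (k * (k + 3) / 2))), Disjoint X B →
      ((B.card : ℝ) - 1) * g X + g (X ∪ B) ≤ ∑ b ∈ B, g (insert b X) := by
    intro B
    induction B using Finset.induction_on with
    | empty => intro X _; simp
    | @insert a s ha ih =>
      intro X hd
      have haX : a ∉ X := fun h =>
        (Finset.disjoint_left.mp hd h (Finset.mem_insert_self a s))
      have hds : Disjoint X s :=
        (Finset.disjoint_insert_right.mp hd).2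
      have h1 : (insert a X) ∪ (X ∪ s) = X ∪ insert a s := by
        ext x
        simp only [Finset.mem_union, Finset.mem_insert]
        tauto
      have h2 : (insert a X) ∩ (X ∪ s) = X := by
        ext x
        simp only [Finset.mem_inter, Finset.mem_union, Finset.mem_insert]
        constructor
        · rintro ⟨rfl | hx, h | h⟩
          · exact absurd h haX
          · exact absurd h ha
          · exact hx
          · exact hx
        · intro hx; exact ⟨Or.inr hx, Or.inl hx⟩
      have hs := hsub (insert a X) (X ∪ s)
      rw [h1, h2] at hs
      have hih := ih X hds
      rw [Finset.sum_insert ha, Finset.card_insert_of_notMem ha]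
      push_cast
      push_cast at hih
      linarith
  -- evaluation of fk on the empty set
  have hfk0 : fk ∅ = k / 2 := by
    rw [hfk]
    simp only [Finset.empty_inter, Finset.card_empty, Finset.not_nonempty_empty,
      ne_eq, not_true_eq_false, if_false]
    rw [if_pos]
    · have hs0 : (Finset.univ.sup fun _ : Fin k => (0:ℕ)) = 0 :=
        Finset.sup_const Finset.univ_nonempty 0
      simp [Finset.filter_true_of_mem, hs0]
    · simp
  -- evaluation of fk on partial transversal ∪ full block
  have evalU : ∀ (i : ℕ) (hi : i < k) (A : Finset (Fin (k * (k + 3) / 2))),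
      (∀ j : Fin k, (j : ℕ) < i → (A ∩ S j).card = 1) →
      ((A ∩ S ⟨i, hi⟩).card = i + 2) →
      (∀ j : Fin k, i < (j : ℕ) → A ∩ S j = ∅) →
      A.Nonempty →
      fk A = k / 2 := by
    intro i hi A h1 h2 h3 hA
    have hcases : ∀ j : Fin k, (j : ℕ) < i ∨ j = ⟨i, hi⟩ ∨ i < (j : ℕ) := by
      intro j
      rcases lt_trichotomy (j : ℕ) i with h | h | h
      · exact Or.inl h
      · exact Or.inr (Or.inl (Fin.ext h))
      · exact Or.inr (Or.inr h)
    rw [hfk]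
    have hfilt : (Finset.univ.filter (fun j => 2 ≤ (A ∩ S j).card)) = {⟨i, hi⟩} := by
      ext j
      simp only [Finset.mem_filter, Finset.mem_univ, true_and, Finset.mem_singleton]
      constructor
      · intro hj
        rcases hcases j with h | h | h
        · rw [h1 j h] at hj; omega
        · exact h
        · rw [h3 j h] at hj; simp at hj
      · intro hj; rw [hj, h2]; omega
    have hsup : (Finset.univ.sup (fun j => (A ∩ S j).card)) = i + 2 := by
      apply le_antisymm
      · apply Finset.sup_le
        intro j _
        rcases hcases j with h | h | h
        · rw [h1 j h]; omega
        · rw [h, h2]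
        · rw [h3 j h]; simp
      · have := Finset.le_sup (f := fun j => (A ∩ S j).card) (Finset.mem_univ ⟨i, hi⟩)
        simpa [h2] using this
    have hZ : (Finset.univ.filter (fun j => A ∩ S j = ∅)) = Finset.Ioi ⟨i, hi⟩ := by
      ext j
      simp only [Finset.mem_filter, Finset.mem_univ, true_and, Finset.mem_Ioi]
      constructor
      · intro hj
        rcases hcases j with h | h | h
        · have := h1 j h; rw [hj] at this; simp at this
        · rw [h] at hj; rw [hj] at h2; simp at h2
        · exact Fin.lt_def.mpr h
      · intro hj; exact h3 j (Fin.lt_def.mp hj)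
    rw [hfilt, hsup, hZ, Fin.card_Ioi]
    rw [if_pos (by simp), if_pos (Finset.nonempty_iff_ne_empty.mp hA)]
    have : ((k - 1 - i : ℕ) : ℝ) = (k : ℝ) - 1 - i := by
      have : k - 1 - i = k - (1 + i) := by omega
      rw [this, Nat.cast_sub (by omega)]
      push_cast; ring
    rw [this]
    push_cast
    ring
  -- evaluation of fk on a full transversal
  have evalT : ∀ A : Finset (Fin (k * (k + 3) / 2)),
      (∀ j : Fin k, (A ∩ S j).card = 1) → fk A = 0 := by
    intro A h1
    rw [hfk]
    have hfilt : (Finset.univ.filter (fun j => 2 ≤ (A ∩ S j).card)) = ∅ := by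
      apply Finset.filter_false_of_mem
      intro j _
      rw [h1 j]; omega
    have hsup : (Finset.univ.sup (fun j => (A ∩ S j).card)) = 1 := by
      calc Finset.univ.sup (fun j => (A ∩ S j).card)
          = Finset.univ.sup (fun _ : Fin k => 1) :=
            Finset.sup_congr rfl (fun j _ => h1 j)
        _ = 1 := Finset.sup_const Finset.univ_nonempty 1
    have hZ : (Finset.univ.filter (fun j => A ∩ S j = ∅)) = ∅ := by
      apply Finset.filter_false_of_mem
      intro j _
      intro hj
      have := h1 j; rw [hj] at this; simp at this
    have hA : A ≠ ∅ := by
      intro hA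
      have := h1 ⟨0, hk⟩
      rw [hA] at this; simp at this
    rw [hfilt, hsup, hZ]
    rw [if_pos (by simp), if_pos hA]
    norm_num
  -- main greedy construction
  have key : ∀ i, i ≤ k → ∃ X : Finset (Fin (k * (k + 3) / 2)),
      (∀ j : Fin k, ((j : ℕ) < i → (X ∩ S j).card = 1) ∧ (i ≤ (j : ℕ) → X ∩ S j = ∅)) ∧
      (k : ℝ) / 4 < g X := by
    intro i
    induction i with
    | zero =>
      intro _
      refine ⟨∅, fun j => ⟨fun h => absurd h (Nat.not_lt_zero _), fun _ => by simp⟩, ?_⟩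
      have h := hcon ∅
      rw [hfk0] at h
      have h' := abs_lt.mp h
      have hk' : (1 : ℝ) ≤ k := by exact_mod_cast hk
      linarith [h'.2]
    | succ i ih =>
      intro hik
      obtain ⟨X, hX, hgX⟩ := ih (by omega)
      have hi : i < k := hik
      set i' : Fin k := ⟨i, hi⟩ with hi'def
      have hXi : X ∩ S i' = ∅ := (hX i').2 le_rfl
      have hdXS : Disjoint X (S i') := Finset.disjoint_iff_inter_eq_empty.mpr hXi
      have hU : fk (X ∪ S i') = k / 2 := by
        apply evalU i hi
        · intro j hj
          have hne : i' ≠ j := by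
            intro h; rw [← h] at hj; simp [hi'def] at hj
          have hSij : S i' ∩ S j = ∅ :=
            Finset.disjoint_iff_inter_eq_empty.mp (hdisj i' j hne)
          rw [Finset.union_inter_distrib_right, hSij, Finset.union_empty]
          exact (hX j).1 hj
        · rw [Finset.union_inter_distrib_right, hXi, Finset.inter_self,
            Finset.empty_union]
          exact hcard i'
        · intro j hj
          have hne : i' ≠ j := by
            intro h; rw [← h] at hj; simp [hi'def] at hj
          have hSij : S i' ∩ S j = ∅ :=
            Finset.disjoint_iff_inter_eq_empty.mp (hdisj i' j hne)
          rw [Finset.union_inter_distrib_right, hSij, Finset.union_empty]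
          exact (hX j).2 (by omega)
        · have hS : (S i').Nonempty := by
            rw [← Finset.card_pos, hcard i']; omega
          exact hS.mono Finset.subset_union_right
      have hgU : (k : ℝ) / 4 < g (X ∪ S i') := by
        have h := hcon (X ∪ S i')
        rw [hU] at h
        have h' := abs_lt.mp h
        have hk' : (1 : ℝ) ≤ k := by exact_mod_cast hk
        linarith [h'.2]
      have hsum := lemA (S i') X hdXS
      rw [hcard i'] at hsum
      have hlt : ∑ _b ∈ S i', (k : ℝ) / 4 < ∑ b ∈ S i', g (insert b X) := by
        rw [Finset.sum_const, hcard i', nsmul_eq_mul]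
        have hmul : ((i : ℝ) + 1) * ((k : ℝ) / 4) < ((i : ℝ) + 1) * g X :=
          mul_lt_mul_of_pos_left hgX (by positivity)
        push_cast at hsum ⊢
        linarith
      obtain ⟨b, hbS, hbg⟩ := Finset.exists_lt_of_sum_lt hlt
      refine ⟨insert b X, ?_, hbg⟩
      intro j
      constructor
      · intro hj1
        by_cases hj : (j : ℕ) < i
        · have hne : i' ≠ j := by
            intro h; rw [← h] at hj; simp [hi'def] at hj
          have hbj : b ∉ S j := Finset.disjoint_left.mp (hdisj i' j hne) hbS
          rw [Finset.insert_inter_of_notMem hbj]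
          exact (hX j).1 hj
        · have hjv : (j : ℕ) = i := by omega
          have hji : j = i' := Fin.ext hjv
          rw [hji, Finset.insert_inter_of_mem hbS, hXi]
          simp
      · intro hj
        have hne : i' ≠ j := by
          intro h; rw [← h] at hj; simp [hi'def] at hj
        have hbj : b ∉ S j := Finset.disjoint_left.mp (hdisj i' j hne) hbS
        rw [Finset.insert_inter_of_notMem hbj]
        exact (hX j).2 (by omega)
  obtain ⟨X, hX, hgX⟩ := key k le_rfl
  have hT : fk X = 0 := evalT X (fun j => (hX j).1 j.isLt)
  have h := hcon X
  rw [hT] at h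
  have h' := abs_lt.mp h
  linarith [h'.1]
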